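/- (Full second level inner integral.) Let γ₁ denote the standard Gaussian measure on ℝ. Let p ∈ (0,1), w ∈ ℝ, C ≥ 0, ν ≥ 0, and set a = √(2ν), A = √(1−p), B = w√p, ā₀ = −B/A, ā₂ = (a − B)/A, s = 2A²C + 1, D' = ā₀/√s and F' = ( 2AC(Aā₂ + B) + ā₂ )/√s. Then ∫_ℝ exp( −C( (Ag + B)² + φ̄_ν(Ag + B) ) ) dγ₁(g) = e^{Cν}·Φ(ā₀) + e^{−Cν}·( 1 − Φ(ā₂) ) + e^{Cν} · ( e^{−B²C/s} / √s ) · ( Φ(F') − Φ(D') ). -/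

import Mathlib

open MeasureTheory ProbabilityTheory

/-- `sgn t = 1` if `t > 0` and `sgn t = −1` if `t ≤ 0`. -/
noncomputable def sgn (t : ℝ) : ℝ := if 0 < t then 1 else -1

/-- `φ̄_ν(u)`: the per-coordinate minimum of `z² − 2uz + ν·sgn(z)`. -/
noncomputable def phibar (ν u : ℝ) : ℝ :=
  if u ≤ 0 then -u ^ 2 - ν else if u ≤ Real.sqrt (2 * ν) then -ν else -u ^ 2 + ν

/-- Set integral against the standard Gaussian equals the weighted Lebesgue set integral. -/
lemma gauss_set_integral (S : Set ℝ) (hS : MeasurableSet S) (h : ℝ → ℝ) :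
    ∫ x in S, h x ∂(gaussianReal 0 1) = ∫ x in S, gaussianPDFReal 0 1 x * h x := by
  rw [gaussianReal_of_var_ne_zero 0 one_ne_zero]
  have heq : (gaussianPDF 0 1)
      = fun x => ((Real.toNNReal (gaussianPDFReal 0 1 x) : NNReal) : ENNReal) := rfl
  rw [heq, setIntegral_withDensity_eq_setIntegral_smul
    (f := fun x => (gaussianPDFReal 0 1 x).toNNReal)
    (by exact measurable_real_toNNReal.comp (measurable_gaussianPDFReal 0 1)) h hS]
  refine setIntegral_congr_fun hS fun x _ => ?_
  simp [NNReal.smul_def, Real.coe_toNNReal _ (gaussianPDFReal_nonneg 0 1 x)]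

lemma gauss_measure_toReal (S : Set ℝ) :
    ((gaussianReal 0 1) S).toReal = ∫ x in S, gaussianPDFReal 0 1 x := by
  rw [gaussianReal_apply_eq_integral 0 one_ne_zero,
    ENNReal.toReal_ofReal (integral_nonneg fun x => gaussianPDFReal_nonneg 0 1 x)]

set_option maxHeartbeats 1000000 in
theorem full_second_level_inner_integral (p w C ν : ℝ)
    (hp0 : 0 < p) (hp1 : p < 1) (hC : 0 ≤ C) (hν : 0 ≤ ν)
    (a A B a0 a2 s D' F' : ℝ)
    (ha : a = Real.sqrt (2 * ν)) (hA : A = Real.sqrt (1 - p)) (hB : B = w * Real.sqrt p)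
    (ha0 : a0 = -B / A) (ha2 : a2 = (a - B) / A) (hs : s = 2 * A ^ 2 * C + 1)
    (hD' : D' = a0 / Real.sqrt s)
    (hF' : F' = (2 * A * C * (A * a2 + B) + a2) / Real.sqrt s)
    (Φ : ℝ → ℝ) (hΦ : ∀ x, Φ x = ((gaussianReal 0 1) (Set.Iic x)).toReal) :
    ∫ g, Real.exp (-(C * ((A * g + B) ^ 2 + phibar ν (A * g + B)))) ∂(gaussianReal 0 1)
      = Real.exp (C * ν) * Φ a0 + Real.exp (-(C * ν)) * (1 - Φ a2)
        + Real.exp (C * ν) * (Real.exp (-(B ^ 2 * C / s)) / Real.sqrt s)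
          * (Φ F' - Φ D') := by
  have h1p : (0:ℝ) < 1 - p := by linarith
  have hA0 : 0 < A := hA ▸ Real.sqrt_pos.mpr h1p
  have hs0 : 0 < s := by nlinarith [sq_nonneg A]
  have hss : 0 < Real.sqrt s := Real.sqrt_pos.mpr hs0
  have hsqs : Real.sqrt s ^ 2 = s := Real.sq_sqrt hs0.le
  have ha' : 0 ≤ a := ha ▸ Real.sqrt_nonneg _
  have h02 : a0 ≤ a2 := by
    rw [ha0, ha2]
    exact (div_le_div_iff_of_pos_right hA0).mpr (by linarith)
  set γ := gaussianReal 0 1 with hγdef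
  set t := Real.sqrt s with htdef
  have ht0 : t ≠ 0 := hss.ne'
  set d : ℝ := 2 * A * B * C / t with hddef
  -- endpoints of the transformed interval
  have hD2 : t * a0 + d = D' := by
    rw [hddef, hD', ha0]
    have h2 : t * t = 2 * A ^ 2 * C + 1 := by
      rw [htdef, ← hs]; exact Real.mul_self_sqrt hs0.le
    field_simp
    linear_combination (-B) * h2
  have hF2 : t * a2 + d = F' := by
    rw [hddef, hF']
    have h2 : t * t = 2 * A ^ 2 * C + 1 := by
      rw [htdef, ← hs]; exact Real.mul_self_sqrt hs0.le
    field_simp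
    linear_combination a2 * h2
  have hDF : D' ≤ F' := by
    rw [← hD2, ← hF2]
    have : t * a0 ≤ t * a2 := mul_le_mul_of_nonneg_left h02 hss.le
    linarith
  -- key pointwise density identity (completing the square)
  have expand : ∀ g : ℝ, (t * g + d) ^ 2 = s * g ^ 2 + 4 * A * B * C * g
      + 4 * A ^ 2 * B ^ 2 * C ^ 2 / s := by
    intro g
    have h1 : (t * g + d) ^ 2
        = t ^ 2 * g ^ 2 + 4 * A * B * C * g * (t / t) + (2 * A * B * C) ^ 2 / t ^ 2 := by
      rw [hddef]; field_simp; ring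
    rw [h1, htdef, hsqs, div_self ht0]; ring
  have hsne : s ≠ 0 := hs0.ne'
  have key : ∀ g : ℝ, gaussianPDFReal 0 1 g * Real.exp (-(C * (A * g + B) ^ 2))
      = Real.exp (-(B ^ 2 * C / s)) * gaussianPDFReal 0 1 (t * g + d) := by
    intro g
    simp only [gaussianPDFReal, NNReal.coe_one, mul_one, sub_zero]
    have hexp : -g ^ 2 / 2 + -(C * (A * g + B) ^ 2)
        = -(B ^ 2 * C / s) + -(t * g + d) ^ 2 / 2 := by
      rw [expand g, hs]
      have hne : (2 * A ^ 2 * C + 1 : ℝ) ≠ 0 := by rw [← hs]; exact hsne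
      field_simp
      ring
    rw [mul_assoc, ← Real.exp_add, hexp, Real.exp_add]
    ring
  -- region characterizations
  have hregion0 : ∀ g : ℝ, g ≤ a0 ↔ A * g + B ≤ 0 := by
    intro g
    rw [ha0, le_div_iff₀ hA0]
    constructor <;> intro h <;> nlinarith [mul_comm g A]
  have hregion2 : ∀ g : ℝ, g ≤ a2 ↔ A * g + B ≤ a := by
    intro g
    rw [ha2, le_div_iff₀ hA0]
    constructor <;> intro h <;> nlinarith [mul_comm g A]
  set c1 := Real.exp (C * ν) with hc1
  set c3 := Real.exp (-(C * ν)) with hc3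
  set f2fun : ℝ → ℝ := fun g => c1 * Real.exp (-(C * (A * g + B) ^ 2)) with hf2fun
  -- pointwise decomposition
  have hdecomp : ∀ g : ℝ,
      Real.exp (-(C * ((A * g + B) ^ 2 + phibar ν (A * g + B))))
        = (Set.Iic a0).indicator (fun _ => c1) g
          + (Set.Ioc a0 a2).indicator f2fun g
          + (Set.Ioi a2).indicator (fun _ => c3) g := by
    intro g
    simp only [Set.indicator_apply, Set.mem_Iic, Set.mem_Ioc, Set.mem_Ioi, hf2fun]
    rcases le_or_gt g a0 with h0 | h0
    · rw [if_pos h0, if_neg (by rintro ⟨h1, -⟩; exact absurd h1 (not_lt.mpr h0)),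
        if_neg (not_lt.mpr (h0.trans h02))]
      have hu : A * g + B ≤ 0 := (hregion0 g).mp h0
      rw [phibar, if_pos hu, hc1]
      rw [show -(C * ((A * g + B) ^ 2 + (-(A * g + B) ^ 2 - ν))) = C * ν from by ring]
      ring
    · rcases le_or_gt g a2 with h2 | h2
      · rw [if_neg (not_le.mpr h0), if_pos ⟨h0, h2⟩, if_neg (not_lt.mpr h2)]
        have hu0 : ¬ (A * g + B ≤ 0) := fun h => absurd ((hregion0 g).mpr h) (not_le.mpr h0)
        have hu2 : A * g + B ≤ Real.sqrt (2 * ν) := ha ▸ (hregion2 g).mp h2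
        rw [phibar, if_neg hu0, if_pos hu2, hc1, ← Real.exp_add]
        rw [show C * ν + -(C * (A * g + B) ^ 2) = -(C * ((A * g + B) ^ 2 + -ν)) from by ring]
        ring
      · rw [if_neg (not_le.mpr (h02.trans_lt h2)), if_neg
          (by rintro ⟨-, h1⟩; exact absurd h1 (not_le.mpr h2)), if_pos h2]
        have hu2 : ¬ (A * g + B ≤ Real.sqrt (2 * ν)) :=
          fun h => absurd ((hregion2 g).mpr (ha ▸ h)) (not_le.mpr h2)
        have hu0 : ¬ (A * g + B ≤ 0) := by
          intro h; exact hu2 (h.trans (Real.sqrt_nonneg _))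
        rw [phibar, if_neg hu0, if_neg hu2, hc3]
        rw [show -(C * ((A * g + B) ^ 2 + (-(A * g + B) ^ 2 + ν))) = -(C * ν) from by ring]
        ring
  -- integrability of the three pieces
  have hc1pos : 0 < c1 := Real.exp_pos _
  have hmeas2 : Measurable f2fun := by
    rw [hf2fun]
    fun_prop
  have hint1 : Integrable ((Set.Iic a0).indicator fun _ => c1) γ :=
    (integrable_const c1).indicator measurableSet_Iic
  have hint3 : Integrable ((Set.Ioi a2).indicator fun _ => c3) γ :=
    (integrable_const c3).indicator measurableSet_Ioi
  have hint2 : Integrable ((Set.Ioc a0 a2).indicator f2fun) γ := by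
    refine Integrable.mono' (integrable_const c1)
      ((hmeas2.indicator measurableSet_Ioc).aestronglyMeasurable) ?_
    filter_upwards with g
    rw [Set.indicator_apply]
    split_ifs with h
    · rw [hf2fun, Real.norm_eq_abs, abs_of_pos (by positivity)]
      have h1 : Real.exp (-(C * (A * g + B) ^ 2)) ≤ 1 := by
        rw [Real.exp_le_one_iff]
        nlinarith [sq_nonneg (A * g + B)]
      show c1 * Real.exp (-(C * (A * g + B) ^ 2)) ≤ c1
      nlinarith
    · simp [hc1pos.le]
  -- split the integral
  have hint12 : Integrable (fun g => (Set.Iic a0).indicator (fun _ => c1) g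
      + (Set.Ioc a0 a2).indicator f2fun g) γ := hint1.add hint2
  rw [integral_congr_ae (ae_of_all _ hdecomp),
    integral_add hint12 hint3, integral_add hint1 hint2,
    integral_indicator_const c1 measurableSet_Iic,
    integral_indicator_const c3 measurableSet_Ioi,
    integral_indicator measurableSet_Ioc]
  -- the middle integral
  have hmid : ∫ g in Set.Ioc a0 a2, f2fun g ∂γ
      = c1 * (Real.exp (-(B ^ 2 * C / s)) / t) * (Φ F' - Φ D') := by
    rw [gauss_set_integral _ measurableSet_Ioc]
    have hptw : ∀ g ∈ Set.Ioc a0 a2, gaussianPDFReal 0 1 g * f2fun g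
        = c1 * (Real.exp (-(B ^ 2 * C / s)) * gaussianPDFReal 0 1 (t * g + d)) := by
      intro g _
      rw [hf2fun]
      rw [show gaussianPDFReal 0 1 g * (c1 * Real.exp (-(C * (A * g + B) ^ 2)))
        = c1 * (gaussianPDFReal 0 1 g * Real.exp (-(C * (A * g + B) ^ 2))) from by ring, key g]
    rw [setIntegral_congr_fun measurableSet_Ioc hptw, integral_const_mul, integral_const_mul]
    have hchg : t * ∫ x in a0..a2, gaussianPDFReal 0 1 (t * x + d)
        = ∫ x in t * a0 + d..t * a2 + d, gaussianPDFReal 0 1 x :=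
      intervalIntegral.mul_integral_comp_mul_add t d
    rw [hD2, hF2] at hchg
    have hii : ∫ x in Set.Ioc a0 a2, gaussianPDFReal 0 1 (t * x + d)
        = t⁻¹ * ∫ x in Set.Ioc D' F', gaussianPDFReal 0 1 x := by
      rw [← intervalIntegral.integral_of_le h02, ← intervalIntegral.integral_of_le hDF, ← hchg]
      field_simp
    rw [hii]
    have hΦdiff : ∫ x in Set.Ioc D' F', gaussianPDFReal 0 1 x = Φ F' - Φ D' := by
      have hu : γ (Set.Iic D') + γ (Set.Ioc D' F') = γ (Set.Iic F') := by
        rw [← measure_union ((Set.Iic_disjoint_Ioi le_rfl).mono_right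
          Set.Ioc_subset_Ioi_self) measurableSet_Ioc, Set.Iic_union_Ioc_eq_Iic hDF]
      have htr := congrArg ENNReal.toReal hu
      rw [ENNReal.toReal_add (measure_ne_top _ _) (measure_ne_top _ _)] at htr
      rw [← gauss_measure_toReal, hΦ, hΦ]
      have := htr
      rw [hγdef] at this ⊢
      linarith
    rw [hΦdiff]
    ring
  rw [hmid]
  -- the outer pieces
  have hIoi : (γ (Set.Ioi a2)).toReal = 1 - Φ a2 := by
    have hu := measure_add_measure_compl (μ := γ) (measurableSet_Iic (a := a2))
    rw [Set.compl_Iic, measure_univ] at hu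
    have htr := congrArg ENNReal.toReal hu
    rw [ENNReal.toReal_add (measure_ne_top _ _) (measure_ne_top _ _), ENNReal.toReal_one] at htr
    rw [hΦ]
    rw [hγdef] at htr
    linarith
  rw [measureReal_def, measureReal_def, hIoi, hΦ a0, hγdef]
  rw [smul_eq_mul, smul_eq_mul]
  ring
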